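/- arXiv:2508.20403 — 2 statements merged into one kernel-verified Lean document; each statement's English description precedes it below -/
import Mathlib

section
/- Strictly similar edges share their LCA: let T be a tree rooted at r, let e = (u,v) be a pair of vertices with w = LCA(u,v), and let β = min(dist_T(u,w), dist_T(v,w)). If u' is a vertex with dist_T(u,u') ≤ β and v' is a vertex with dist_T(v,v') ≤ β, then LCA(u',v') = LCA(u,v). -/
open SimpleGraph

section Aux

set_option linter.unusedSectionVars false

variable {V : Type*} [DecidableEq V] {T : SimpleGraph V}

/-- In a tree, every path realizes the distance. -/
lemma tree_path_length (hT : T.IsTree) {x y : V} {p : T.Walk x y} (hp : p.IsPath) :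
    p.length = T.dist x y := by
  obtain ⟨q, hq, hql⟩ := hT.isConnected.exists_path_of_dist x y
  rw [(hT.existsUnique_path x y).unique hp hq, hql]

/-- Points on a path are "between" the endpoints. -/
lemma btw_of_mem (hT : T.IsTree) {x y z : V} {p : T.Walk x y} (hp : p.IsPath)
    (hz : z ∈ p.support) : T.dist x z + T.dist z y = T.dist x y := by
  have h1 : (p.takeUntil z hz).length = T.dist x z := tree_path_length hT (hp.takeUntil hz)
  have h2 : (p.dropUntil z hz).length = T.dist z y := tree_path_length hT (hp.dropUntil hz)
  have h3 : p.length = T.dist x y := tree_path_length hT hp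
  have h4 := congrArg SimpleGraph.Walk.length (p.take_spec hz)
  rw [SimpleGraph.Walk.length_append] at h4
  omega

/-- Conversely, between points lie on the path. -/
lemma mem_of_btw (hT : T.IsTree) {x y z : V} {p : T.Walk x y} (hp : p.IsPath)
    (h : T.dist x z + T.dist z y = T.dist x y) : z ∈ p.support := by
  obtain ⟨q1, hq1, l1⟩ := hT.isConnected.exists_path_of_dist x z
  obtain ⟨q2, hq2, l2⟩ := hT.isConnected.exists_path_of_dist z y
  have hW : (q1.append q2).length = T.dist x y := by
    rw [SimpleGraph.Walk.length_append]; omega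
  have hWp : (q1.append q2).IsPath := SimpleGraph.Walk.isPath_of_length_eq_dist _ hW
  rw [← (hT.existsUnique_path x y).unique hWp hp]
  exact (SimpleGraph.Walk.mem_support_append_iff _ _).mpr (Or.inl q1.end_mem_support)

lemma btw_trans1 (hc : T.Connected) {a b c e : V}
    (h1 : T.dist a b + T.dist b c = T.dist a c)
    (h2 : T.dist a c + T.dist c e = T.dist a e) :
    T.dist a b + T.dist b e = T.dist a e := by
  have t1 : T.dist a e ≤ T.dist a b + T.dist b e := hc.dist_triangle
  have t2 : T.dist b e ≤ T.dist b c + T.dist c e := hc.dist_triangle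
  omega

lemma btw_trans3 (hc : T.Connected) {a b c e : V}
    (h1 : T.dist a b + T.dist b e = T.dist a e)
    (h2 : T.dist b c + T.dist c e = T.dist b e) :
    T.dist a c + T.dist c e = T.dist a e := by
  have t1 : T.dist a c ≤ T.dist a b + T.dist b c := hc.dist_triangle
  have t2 : T.dist a e ≤ T.dist a c + T.dist c e := hc.dist_triangle
  omega

/-- Comparability of two points lying between `r` and `u`. -/
lemma btw_total (hT : T.IsTree) {r u w m : V}
    (hbw : T.dist r w + T.dist w u = T.dist r u)
    (hbm : T.dist r m + T.dist m u = T.dist r u)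
    (hle : T.dist u m ≤ T.dist u w) :
    T.dist r w + T.dist w m = T.dist r m := by
  obtain ⟨p, hp, _⟩ := hT.isConnected.exists_path_of_dist r u
  have hm : m ∈ p.support := mem_of_btw hT hp hbm
  have hw : w ∈ p.support := mem_of_btw hT hp hbw
  rw [← p.take_spec hm] at hw
  rcases (SimpleGraph.Walk.mem_support_append_iff _ _).mp hw with h | h
  · exact btw_of_mem hT (hp.takeUntil hm) h
  · have h2 : T.dist m w + T.dist w u = T.dist m u := btw_of_mem hT (hp.dropUntil hm) h
    have c1 : T.dist u m = T.dist m u := SimpleGraph.dist_comm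
    have c2 : T.dist u w = T.dist w u := SimpleGraph.dist_comm
    have h0 : T.dist m w = 0 := by omega
    have : m = w := (hT.isConnected.dist_eq_zero_iff).mp h0
    subst this
    simp [SimpleGraph.dist_self]

/-- Existence of medians in a tree. -/
lemma exists_median (hT : T.IsTree) (x y z : V) :
    ∃ m : V, T.dist x m + T.dist m y = T.dist x y ∧
      T.dist x m + T.dist m z = T.dist x z ∧
      T.dist y m + T.dist m z = T.dist y z := by
  classical
  obtain ⟨p, hp, _⟩ := hT.isConnected.exists_path_of_dist y z
  obtain ⟨m, hmmem, hmmin⟩ := Finset.exists_min_image p.support.toFinset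
    (fun c => T.dist x c) ⟨y, List.mem_toFinset.mpr p.start_mem_support⟩
  rw [List.mem_toFinset] at hmmem
  have hmmin' : ∀ c ∈ p.support, T.dist x m ≤ T.dist x c := fun c hc =>
    hmmin c (List.mem_toFinset.mpr hc)
  have key : ∀ (a : V) (t : T.Walk a m), t.IsPath → (∀ c ∈ t.support, c ∈ p.support) →
      T.dist a m + T.dist m x = T.dist a x := by
    intro a t ht hsub
    obtain ⟨q', hq', lq'⟩ := hT.isConnected.exists_path_of_dist m x
    have hndq := hq'.support_nodup
    rw [q'.support_eq_cons] at hndq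
    have hnd : (t.append q').support.Nodup := by
      rw [SimpleGraph.Walk.support_append, List.nodup_append]
      refine ⟨ht.support_nodup, (List.nodup_cons.mp hndq).2, ?_⟩
      intro c hc1 b hc2 hcb
      subst hcb
      have hcq : c ∈ q'.support := by
        rw [q'.support_eq_cons]; exact List.mem_cons_of_mem _ hc2
      have hb : T.dist m c + T.dist c x = T.dist m x := btw_of_mem hT hq' hcq
      have hmin := hmmin' c (hsub c hc1)
      have c1 : T.dist x m = T.dist m x := SimpleGraph.dist_comm
      have c2 : T.dist x c = T.dist c x := SimpleGraph.dist_comm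
      have h0 : T.dist m c = 0 := by omega
      have : m = c := (hT.isConnected.dist_eq_zero_iff).mp h0
      subst this
      exact (List.nodup_cons.mp hndq).1 hc2
    have hpath : (t.append q').IsPath := (SimpleGraph.Walk.isPath_def _).mpr hnd
    have hlen := tree_path_length hT hpath
    rw [SimpleGraph.Walk.length_append, tree_path_length hT ht, lq'] at hlen
    exact hlen
  have h1 : T.dist y m + T.dist m x = T.dist y x :=
    key y (p.takeUntil m hmmem) (hp.takeUntil hmmem)
      (fun c hc => p.support_takeUntil_subset hmmem hc)
  have h2 : T.dist z m + T.dist m x = T.dist z x :=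
    key z (p.dropUntil m hmmem).reverse (hp.dropUntil hmmem).reverse
      (fun c hc => by
        rw [SimpleGraph.Walk.support_reverse, List.mem_reverse] at hc
        exact p.support_dropUntil_subset hmmem hc)
  have h3 : T.dist y m + T.dist m z = T.dist y z := btw_of_mem hT hp hmmem
  have c1 : T.dist x m = T.dist m x := SimpleGraph.dist_comm
  have c2 : T.dist m y = T.dist y m := SimpleGraph.dist_comm
  have c3 : T.dist x y = T.dist y x := SimpleGraph.dist_comm
  have c4 : T.dist m z = T.dist z m := SimpleGraph.dist_comm
  have c5 : T.dist x z = T.dist z x := SimpleGraph.dist_comm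
  exact ⟨m, by omega, by omega, h3⟩

end Aux

/-- `a` is an ancestor of `x` in the tree `T` rooted at `r`: `a` lies on the unique
path from `r` to `x` (equivalently, the tree distance is additive through `a`). -/
def IsAncestor {V : Type*} (T : SimpleGraph V) (r a x : V) : Prop :=
  T.dist r a + T.dist a x = T.dist r x

/-- `w` is the least common ancestor of `u` and `v` in the tree `T` rooted at `r`:
a common ancestor of maximal depth. -/
def IsLCA {V : Type*} (T : SimpleGraph V) (r w u v : V) : Prop :=
  IsAncestor T r w u ∧ IsAncestor T r w v ∧
    ∀ a : V, IsAncestor T r a u → IsAncestor T r a v → T.dist r a ≤ T.dist r w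

/-- Strictly similar edges share their LCA: if `w = LCA(u,v)`,
`β = min(dist(u,w), dist(v,w))`, `dist(u,u') ≤ β` and `dist(v,v') ≤ β`, then
`w` is also the LCA of `u'` and `v'`. -/
theorem strictly_similar_share_lca {V : Type*} [Fintype V] (T : SimpleGraph V)
    (hT : T.IsTree) (r u v w : V) (hw : IsLCA T r w u v) (u' v' : V)
    (hu' : T.dist u u' ≤ min (T.dist u w) (T.dist v w))
    (hv' : T.dist v v' ≤ min (T.dist u w) (T.dist v w)) :
    IsLCA T r w u' v' := by
  classical
  have hc : T.Connected := hT.isConnected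
  obtain ⟨h1, h2, h3⟩ := hw
  have h1' : T.dist r w + T.dist w u = T.dist r u := h1
  have h2' : T.dist r w + T.dist w v = T.dist r v := h2
  have hu1 : T.dist u u' ≤ T.dist u w := le_trans hu' (min_le_left _ _)
  have hv1 : T.dist v v' ≤ T.dist v w := le_trans hv' (min_le_right _ _)
  -- `w` is an ancestor of any point within distance `dist x w` of `x`
  have anc : ∀ x x' : V, T.dist r w + T.dist w x = T.dist r x →
      T.dist x x' ≤ T.dist x w → T.dist r w + T.dist w x' = T.dist r x' := by
    intro x x' hbx hlex
    obtain ⟨m, hm1, hm2, hm3⟩ := exists_median hT r x x'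
    have hdm : T.dist x m ≤ T.dist x w := by
      have cxm : T.dist x m = T.dist m x := SimpleGraph.dist_comm
      omega
    have hcomp := btw_total hT hbx hm1 hdm
    exact btw_trans1 hc hcomp hm2
  have hAu : T.dist r w + T.dist w u' = T.dist r u' := anc u u' h1' hu1
  have hAv : T.dist r w + T.dist w v' = T.dist r v' := anc v v' h2' hv1
  -- key geometric fact: `w` lies on the path from `u'` to `v'`
  have hE : T.dist u' w + T.dist w v' = T.dist u' v' := by
    by_cases hwu : u' = w
    · subst hwu; simp [SimpleGraph.dist_self]
    by_cases hwv : v' = w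
    · subst hwv; simp [SimpleGraph.dist_self]
    obtain ⟨m, hm1, hm2, hm3⟩ := exists_median hT w u' v'
    have hmw : m = w := by
      by_contra hmw
      obtain ⟨p, hp, hlenp⟩ := hc.exists_path_of_dist w m
      cases p with
      | nil => exact hmw rfl
      | cons hadj q =>
        rename_i c₁
        have hd1 : T.dist w c₁ = 1 := SimpleGraph.dist_eq_one_iff_adj.mpr hadj
        have hc1mem : c₁ ∈ (SimpleGraph.Walk.cons hadj q).support := by
          rw [SimpleGraph.Walk.support_cons]
          exact List.mem_cons_of_mem _ q.start_mem_support
        have hbc1m : T.dist w c₁ + T.dist c₁ m = T.dist w m := btw_of_mem hT hp hc1mem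
        have hu'ne : u' ≠ w := hwu
        have hv'ne : v' ≠ w := hwv
        -- `c₁` is an ancestor of both `u` and `v`, one step deeper than `w`
        have claim : ∀ x x' : V, T.dist r w + T.dist w x = T.dist r x →
            T.dist x x' ≤ T.dist x w → x' ≠ w →
            T.dist w m + T.dist m x' = T.dist w x' →
            T.dist r c₁ + T.dist c₁ x = T.dist r x := by
          intro x x' hbx hlex hxw hmx'
          have hwc1x' : T.dist w c₁ + T.dist c₁ x' = T.dist w x' :=
            btw_trans1 hc hbc1m hmx'
          obtain ⟨qq, hq1, hq2, hq3⟩ := exists_median hT w x x'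
          have hqne : qq ≠ w := by
            intro h
            rw [h] at hq3
            have hpos : 0 < T.dist w x' := hc.pos_dist_of_ne (Ne.symm hxw)
            have cxw : T.dist x w = T.dist w x := SimpleGraph.dist_comm
            omega
          have hdq : 0 < T.dist w qq := hc.pos_dist_of_ne (Ne.symm hqne)
          have hle' : T.dist x' qq ≤ T.dist x' c₁ := by
            have a1 : T.dist x' qq = T.dist qq x' := SimpleGraph.dist_comm
            have a2 : T.dist x' c₁ = T.dist c₁ x' := SimpleGraph.dist_comm
            omega
          have hcq : T.dist w c₁ + T.dist c₁ qq = T.dist w qq :=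
            btw_total hT hwc1x' hq2 hle'
          have hwc1x : T.dist w c₁ + T.dist c₁ x = T.dist w x :=
            btw_trans1 hc hcq hq1
          exact btw_trans3 hc hbx hwc1x
        have hcu := claim u u' h1' hu1 hu'ne hm1
        have hcv := claim v v' h2' hv1 hv'ne hm2
        have hwc1u' : T.dist w c₁ + T.dist c₁ u' = T.dist w u' :=
          btw_trans1 hc hbc1m hm1
        have hrc1u' : T.dist r c₁ + T.dist c₁ u' = T.dist r u' :=
          btw_trans3 hc hAu hwc1u'
        have hmax := h3 c₁ hcu hcv
        omega
    subst hmw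
    have c1 : T.dist u' m = T.dist m u' := SimpleGraph.dist_comm
    omega
  refine ⟨hAu, hAv, ?_⟩
  intro a ha hb
  have ha' : T.dist r a + T.dist a u' = T.dist r u' := ha
  have hb' : T.dist r a + T.dist a v' = T.dist r v' := hb
  have tri : T.dist u' v' ≤ T.dist u' a + T.dist a v' := hc.dist_triangle
  have c1 : T.dist u' a = T.dist a u' := SimpleGraph.dist_comm
  have c2 : T.dist u' w = T.dist w u' := SimpleGraph.dist_comm
  omega
end

section
/- Contrapositive of LCA-sharing: given a tree T rooted at r and two vertex pairs e = (u,v) and e' = (u',v'), if LCA(u,v) ≠ LCA(u',v'), then e' is not strictly similar to e, where strict similarity uses β = min(dist_T(u, LCA(u,v)), dist_T(v, LCA(u,v))). -/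
/-- `(u', v')` is strictly similar to `(u, v)` whose LCA is `w`, with BFS step size
`β = min(dist(u,w), dist(v,w))`. -/
def StrictSim {V : Type*} (T : SimpleGraph V) (u v w u' v' : V) : Prop :=
  (T.dist u u' ≤ min (T.dist u w) (T.dist v w) ∧ T.dist v v' ≤ min (T.dist u w) (T.dist v w)) ∨
  (T.dist v u' ≤ min (T.dist u w) (T.dist v w) ∧ T.dist u v' ≤ min (T.dist u w) (T.dist v w))

section Helpers

open SimpleGraph Walk

variable {V : Type*} [DecidableEq V] {T : SimpleGraph V}

private lemma exists_path' (hc : T.Connected) (x y : V) :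
    ∃ p : T.Walk x y, p.IsPath := ⟨((hc x y).some).bypass, bypass_isPath _⟩

private lemma path_length_eq_dist (hT : T.IsTree) {x y : V} (p : T.Walk x y) (hp : p.IsPath) :
    p.length = T.dist x y := by
  obtain ⟨q, hq⟩ := hT.isConnected.exists_walk_length_eq_dist x y
  have hb : q.bypass.IsPath := q.bypass_isPath
  have hlen : q.bypass.length = T.dist x y :=
    le_antisymm (hq ▸ q.length_bypass_le) (SimpleGraph.dist_le _)
  rw [(hT.existsUnique_path x y).unique hp hb, hlen]

private lemma split_dist (hT : T.IsTree) {x y z : V} (p : T.Walk x y) (hp : p.IsPath)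
    (hz : z ∈ p.support) : T.dist x z + T.dist z y = T.dist x y := by
  classical
  rw [← path_length_eq_dist hT _ (hp.takeUntil hz), ← path_length_eq_dist hT _ (hp.dropUntil hz),
    ← length_append, take_spec]
  exact path_length_eq_dist hT p hp

/-- a geodesic concatenation through a "geodesic point" is a path -/
private lemma append_geodesic_isPath (hT : T.IsTree) {r a x : V}
    (h1 : T.dist r a + T.dist a x = T.dist r x)
    (pa : T.Walk r a) (hpa : pa.IsPath) (pax : T.Walk a x) (hpax : pax.IsPath) :
    (pa.append pax).IsPath := by
  have lb : (pa.append pax).length = T.dist r x := by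
    rw [length_append, path_length_eq_dist hT pa hpa, path_length_eq_dist hT pax hpax]; exact h1
  have hby : (pa.append pax).bypass.length = T.dist r x :=
    le_antisymm (lb ▸ length_bypass_le _) (SimpleGraph.dist_le _)
  have := bypass_eq_self_of_length_le (pa.append pax) (by omega)
  rw [← this]; exact bypass_isPath _

private lemma chain (hT : T.IsTree) {r a b x : V} (h1 : IsAncestor T r a x)
    (h2 : IsAncestor T r b x) (hab : T.dist r a ≤ T.dist r b) :
    IsAncestor T r a b ∧ T.dist a b + T.dist b x = T.dist a x := by
  classical
  obtain ⟨pa, hpa⟩ := exists_path' hT.isConnected r a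
  obtain ⟨pax, hpax⟩ := exists_path' hT.isConnected a x
  obtain ⟨pb, hpb⟩ := exists_path' hT.isConnected r b
  obtain ⟨pbx, hpbx⟩ := exists_path' hT.isConnected b x
  have hWa := append_geodesic_isPath hT h1 pa hpa pax hpax
  have hWb := append_geodesic_isPath hT h2 pb hpb pbx hpbx
  have heq : pa.append pax = pb.append pbx := (hT.existsUnique_path r x).unique hWa hWb
  have hbmem : b ∈ (pa.append pax).support := by
    rw [heq, mem_support_append_iff]; exact Or.inl (end_mem_support _)
  rw [mem_support_append_iff] at hbmem
  have hz := hT.isConnected.dist_eq_zero_iff (u := b) (v := a)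
  rcases hbmem with hb1 | hb2
  · have := split_dist hT pa hpa hb1
    have hba : b = a := by apply hz.1; omega
    subst hba
    refine ⟨?_, ?_⟩ <;> simp [IsAncestor, SimpleGraph.dist_self] <;> omega
  · have h3 := split_dist hT pax hpax hb2
    unfold IsAncestor at *
    constructor <;> omega

private lemma anc_trans (hT : T.IsTree) {r a b x : V} (h1 : IsAncestor T r a b)
    (h2 : IsAncestor T r b x) : IsAncestor T r a x := by
  unfold IsAncestor at *
  have t1 := hT.isConnected.dist_triangle (u := a) (v := b) (w := x)
  have t2 := hT.isConnected.dist_triangle (u := r) (v := a) (w := x)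
  omega

private lemma median (hT : T.IsTree) (r x y : V) :
    ∃ m, IsAncestor T r m x ∧ IsAncestor T r m y ∧ T.dist x m + T.dist m y = T.dist x y := by
  classical
  obtain ⟨p, hp⟩ := exists_path' hT.isConnected x y
  have hne : p.support.toFinset.Nonempty := ⟨x, by simp [start_mem_support]⟩
  obtain ⟨m, hm, hmin⟩ := p.support.toFinset.exists_min_image (T.dist r) hne
  rw [List.mem_toFinset] at hm
  have hmin' : ∀ z ∈ p.support, T.dist r m ≤ T.dist r z := fun z hzp =>
    hmin z (List.mem_toFinset.2 hzp)
  obtain ⟨g, hg⟩ := exists_path' hT.isConnected r m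
  -- key: g.support ∩ (subpath of p).support ⊆ {m}
  have key : ∀ (c : V) (q : T.Walk m c), q.IsPath → (∀ z ∈ q.support, z ∈ p.support) →
      IsAncestor T r m c := by
    intro c q hq hsub
    have hgq : (g.append q).IsPath := by
      rw [isPath_def, support_append, List.nodup_append]
      refine ⟨hg.support_nodup, hq.support_nodup.tail, ?_⟩
      intro z hz1 z₂ hz2 hzz; subst hzz
      have hz2' : z ∈ q.support := List.mem_of_mem_tail hz2
      have h5 := split_dist hT g hg hz1
      have h6 := hmin' z (hsub z hz2')
      have hzm : z = m := by
        apply (hT.isConnected.dist_eq_zero_iff (u := z) (v := m)).1; omega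
      rw [hzm] at hz2
      have hm2 : m ∉ q.support.tail := by
        have hnd := hq.support_nodup
        rw [support_eq_cons q] at hnd
        exact (List.nodup_cons.1 hnd).1
      exact hm2 hz2
    have := path_length_eq_dist hT _ hgq
    rw [length_append, path_length_eq_dist hT g hg, path_length_eq_dist hT q hq] at this
    exact this
  refine ⟨m, ?_, ?_, split_dist hT p hp hm⟩
  · have := key x (p.takeUntil m hm).reverse ((hp.takeUntil hm).reverse) ?_
    · exact this
    · intro z hz
      rw [support_reverse, List.mem_reverse] at hz
      exact p.support_takeUntil_subset hm hz
  · exact key y (p.dropUntil m hm) (hp.dropUntil hm)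
      (fun z hz => p.support_dropUntil_subset hm hz)

private lemma sideA (hT : T.IsTree) {r w w' z z' : V}
    (hwz : IsAncestor T r w z) (hw'z' : IsAncestor T r w' z')
    (hd : T.dist z z' ≤ T.dist z w) : IsAncestor T r w z' := by
  obtain ⟨m, hmz, hmz', hmsum⟩ := median hT r z z'
  have c1 : T.dist z m = T.dist m z := T.dist_comm ..
  have c2 : T.dist z w = T.dist w z := T.dist_comm ..
  have hdm : T.dist r w ≤ T.dist r m := by
    unfold IsAncestor at hmz hwz; omega
  exact anc_trans hT (chain hT hwz hmz hdm).1 hmz'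

private lemma sideB (hT : T.IsTree) {r w w' z z' : V}
    (hwz : IsAncestor T r w z) (hw'z' : IsAncestor T r w' z')
    (hd : T.dist z z' ≤ T.dist z w) (hww' : T.dist r w ≤ T.dist r w') :
    ∃ c, IsAncestor T r c z ∧ IsAncestor T r c w' ∧
      T.dist r w + T.dist r w' ≤ 2 * T.dist r c := by
  obtain ⟨m, hmz, hmz', hmsum⟩ := median hT r z z'
  have c1 : T.dist z m = T.dist m z := T.dist_comm ..
  have c2 : T.dist z w = T.dist w z := T.dist_comm ..
  rcases le_total (T.dist r w') (T.dist r m) with hc | hc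
  · have h := chain hT hw'z' hmz' hc
    refine ⟨w', anc_trans hT h.1 hmz, ?_, by omega⟩
    unfold IsAncestor
    simp [T.dist_self]
  · have h := chain hT hmz' hw'z' hc
    refine ⟨m, hmz, h.1, ?_⟩
    have h1 := h.1
    have h2 := h.2
    unfold IsAncestor at hmz hwz h1
    omega

private lemma lca_eq (hT : T.IsTree) {r u v w u' v' w' : V}
    (hw : IsLCA T r w u v) (hw' : IsLCA T r w' u' v')
    (h1 : T.dist u u' ≤ min (T.dist u w) (T.dist v w))
    (h2 : T.dist v v' ≤ min (T.dist u w) (T.dist v w)) : w = w' := by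
  have h1' : T.dist u u' ≤ T.dist u w := h1.trans (min_le_left _ _)
  have h2' : T.dist v v' ≤ T.dist v w := h2.trans (min_le_right _ _)
  have hu' : IsAncestor T r w u' := sideA hT hw.1 hw'.1 h1'
  have hv' : IsAncestor T r w v' := sideA hT hw.2.1 hw'.2.1 h2'
  have hDw : T.dist r w ≤ T.dist r w' := hw'.2.2 w hu' hv'
  obtain ⟨c₁, hc₁u, hc₁w', hb₁⟩ := sideB hT hw.1 hw'.1 h1' hDw
  obtain ⟨c₂, hc₂v, hc₂w', hb₂⟩ := sideB hT hw.2.1 hw'.2.1 h2' hDw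
  have hDeq : T.dist r w = T.dist r w' := by
    rcases le_total (T.dist r c₁) (T.dist r c₂) with hc | hc
    · have hcc := (chain hT hc₁w' hc₂w' hc).1
      have := hw.2.2 c₁ hc₁u (anc_trans hT hcc hc₂v)
      omega
    · have hcc := (chain hT hc₂w' hc₁w' hc).1
      have := hw.2.2 c₂ (anc_trans hT hcc hc₁u) hc₂v
      omega
  have hfin := (chain hT hu' hw'.1 hDw).1
  unfold IsAncestor at hfin
  have : T.dist w w' = 0 := by omega
  exact (hT.isConnected.dist_eq_zero_iff).1 this

end Helpers

/-- Contrapositive of LCA-sharing: pairs with distinct LCAs are never strictly similar. -/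
theorem not_strictSim_of_ne_lca {V : Type*} [Fintype V] (T : SimpleGraph V)
    (hT : T.IsTree) (r u v w u' v' w' : V)
    (hw : IsLCA T r w u v) (hw' : IsLCA T r w' u' v') (hne : w ≠ w') :
    ¬ StrictSim T u v w u' v' := by
  classical
  intro hs
  rcases hs with ⟨h1, h2⟩ | ⟨h1, h2⟩
  · exact hne (lca_eq hT hw hw' h1 h2)
  · have hw2 : IsLCA T r w v u := ⟨hw.2.1, hw.1, fun a hav hau => hw.2.2 a hau hav⟩
    rw [min_comm] at h1 h2
    exact hne (lca_eq hT hw2 hw' h1 h2)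
end
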